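/- Define the rational functions q(x,t) = (x⁴ + 2x³ + 24xt + 12t) / (2(2x³ + 3x² + 12t)) and r(x,t) = −6(2x⁴ + 4x³ + 3x² − 24xt − 12t) / ((x³ − 12t)(x³ + 3x² + 3x − 12t)). At every point (x,t) where 2x³ + 3x² + 12t ≠ 0, x³ − 12t ≠ 0 and x³ + 3x² + 3x − 12t ≠ 0, q satisfies ∂_t q = ∂_x³ q + 3 q (∂_x² q) r + 3 (∂_x q)² r + 3 (∂_x q)(q r)². -/

import Mathlib

noncomputable def q (x t : ℝ) : ℝ :=
  (x ^ 4 + 2 * x ^ 3 + 24 * x * t + 12 * t) / (2 * (2 * x ^ 3 + 3 * x ^ 2 + 12 * t))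

noncomputable def r (x t : ℝ) : ℝ :=
  -6 * (2 * x ^ 4 + 4 * x ^ 3 + 3 * x ^ 2 - 24 * x * t - 12 * t)
    / ((x ^ 3 - 12 * t) * (x ^ 3 + 3 * x ^ 2 + 3 * x - 12 * t))

noncomputable def g1 (t y : ℝ) : ℝ :=
  (4*y^6 + 12*y^5 + 12*y^4 - 96*y^3*t - 144*y^2*t - 144*y*t + 576*t^2)
    / (2 * (2 * y ^ 3 + 3 * y ^ 2 + 12 * t)) ^ 2

noncomputable def g2 (t y : ℝ) : ℝ :=
  (-24*y^6 + 1728*y^5*t + 4320*y^4*t + 5760*y^3*t - 20736*y^2*t^2 + 2592*y^2*t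
      - 20736*y*t^2 - 3456*t^2)
    / (2 * (2 * y ^ 3 + 3 * y ^ 2 + 12 * t)) ^ 3

noncomputable def g3 (t y : ℝ) : ℝ :=
  (288*y^8 - 27648*y^7*t - 96768*y^6*t - 193536*y^5*t + 787968*y^4*t^2 - 176256*y^4*t
      + 1575936*y^3*t^2 - 62208*y^3*t + 1161216*y^2*t^2 - 995328*y*t^3 + 248832*y*t^2
      - 497664*t^3)
    / (2 * (2 * y ^ 3 + 3 * y ^ 2 + 12 * t)) ^ 4

lemma polyD (c0 c1 c2 c3 c4 c5 c6 y : ℝ) :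
    HasDerivAt (fun z : ℝ => c6*z^6 + c5*z^5 + c4*z^4 + c3*z^3 + c2*z^2 + c1*z + c0)
      (6*c6*y^5 + 5*c5*y^4 + 4*c4*y^3 + 3*c3*y^2 + 2*c2*y + c1) y := by
  have h : ∀ n : ℕ, ∀ c : ℝ, HasDerivAt (fun z : ℝ => c * z ^ n) (c * (n * y ^ (n - 1))) y :=
    fun n c => (hasDerivAt_pow n y).const_mul c
  have H := (((((((h 6 c6).add (h 5 c5)).add (h 4 c4)).add (h 3 c3)).add (h 2 c2)).add
      (h 1 c1)).add (hasDerivAt_const y c0))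
  have H' := H.congr_of_eventuallyEq (Filter.Eventually.of_forall (fun z => by simp only [Pi.add_apply]; ring) :
    (fun z : ℝ => c6*z^6 + c5*z^5 + c4*z^4 + c3*z^3 + c2*z^2 + c1*z + c0) =ᶠ[nhds y] _)
  refine H'.congr_deriv ?_
  push_cast
  ring

lemma hbase (t y : ℝ) :
    HasDerivAt (fun z : ℝ => 2 * (2 * z ^ 3 + 3 * z ^ 2 + 12 * t)) (12*y^2 + 12*y) y := by
  have H := polyD (24*t) 0 6 4 0 0 0 y
  have H' := H.congr_of_eventuallyEq (Filter.Eventually.of_forall (fun z => by ring) :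
    (fun z : ℝ => 2 * (2 * z ^ 3 + 3 * z ^ 2 + 12 * t)) =ᶠ[nhds y] _)
  refine H'.congr_deriv ?_
  ring

lemma dq (t y : ℝ) (h : 2 * y ^ 3 + 3 * y ^ 2 + 12 * t ≠ 0) :
    HasDerivAt (fun z : ℝ => q z t) (g1 t y) y := by
  have hne : 2 * (2 * y ^ 3 + 3 * y ^ 2 + 12 * t) ≠ 0 := mul_ne_zero two_ne_zero h
  have hN := polyD (12*t) (24*t) 0 2 1 0 0 y
  have hN' := hN.congr_of_eventuallyEq (Filter.Eventually.of_forall (fun z => by ring) :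
    (fun z : ℝ => z ^ 4 + 2 * z ^ 3 + 24 * z * t + 12 * t) =ᶠ[nhds y] _)
  have H := hN'.div (hbase t y) hne
  have H' := H.congr_of_eventuallyEq (Filter.Eventually.of_forall (fun z => by simp only [q, Pi.div_apply]) :
    (fun z : ℝ => q z t) =ᶠ[nhds y] _)
  refine H'.congr_deriv ?_
  rw [g1]
  field_simp
  ring

lemma dg1 (t y : ℝ) (h : 2 * y ^ 3 + 3 * y ^ 2 + 12 * t ≠ 0) :
    HasDerivAt (g1 t) (g2 t y) y := by
  have hne : 2 * (2 * y ^ 3 + 3 * y ^ 2 + 12 * t) ≠ 0 := mul_ne_zero two_ne_zero h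
  have hne2 : (2 * (2 * y ^ 3 + 3 * y ^ 2 + 12 * t)) ^ 2 ≠ 0 := pow_ne_zero 2 hne
  have hN := polyD (576*t^2) (-144*t) (-144*t) (-96*t) 12 12 4 y
  have hN' := hN.congr_of_eventuallyEq (Filter.Eventually.of_forall (fun z => by ring) :
    (fun z : ℝ => 4*z^6 + 12*z^5 + 12*z^4 - 96*z^3*t - 144*z^2*t - 144*z*t + 576*t^2)
      =ᶠ[nhds y] _)
  have H := hN'.div ((hbase t y).pow 2) hne2
  have H' := H.congr_of_eventuallyEq (Filter.Eventually.of_forall (fun z => by simp only [g1, Pi.div_apply, Pi.pow_apply]) :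
    (g1 t) =ᶠ[nhds y] _)
  refine H'.congr_deriv ?_
  rw [g2]
  simp only [Pi.pow_apply]
  norm_num
  field_simp
  ring

lemma dg2 (t y : ℝ) (h : 2 * y ^ 3 + 3 * y ^ 2 + 12 * t ≠ 0) :
    HasDerivAt (g2 t) (g3 t y) y := by
  have hne : 2 * (2 * y ^ 3 + 3 * y ^ 2 + 12 * t) ≠ 0 := mul_ne_zero two_ne_zero h
  have hne3 : (2 * (2 * y ^ 3 + 3 * y ^ 2 + 12 * t)) ^ 3 ≠ 0 := pow_ne_zero 3 hne
  have hN := polyD (-3456*t^2) (-20736*t^2) (-20736*t^2 + 2592*t) (5760*t) (4320*t) (1728*t)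
    (-24) y
  have hN' := hN.congr_of_eventuallyEq (Filter.Eventually.of_forall (fun z => by ring) :
    (fun z : ℝ => -24*z^6 + 1728*z^5*t + 4320*z^4*t + 5760*z^3*t - 20736*z^2*t^2 + 2592*z^2*t
      - 20736*z*t^2 - 3456*t^2) =ᶠ[nhds y] _)
  have H := hN'.div ((hbase t y).pow 3) hne3
  have H' := H.congr_of_eventuallyEq (Filter.Eventually.of_forall (fun z => by simp only [g2, Pi.div_apply, Pi.pow_apply]) :
    (g2 t) =ᶠ[nhds y] _)
  refine H'.congr_deriv ?_
  rw [g3]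
  simp only [Pi.pow_apply]
  norm_num
  field_simp
  ring

lemma dqt (x t : ℝ) (h : 2 * x ^ 3 + 3 * x ^ 2 + 12 * t ≠ 0) :
    HasDerivAt (fun s : ℝ => q x s)
      ((72*x^4 + 144*x^3 + 72*x^2) / (2 * (2 * x ^ 3 + 3 * x ^ 2 + 12 * t)) ^ 2) t := by
  have hne : 2 * (2 * x ^ 3 + 3 * x ^ 2 + 12 * t) ≠ 0 := mul_ne_zero two_ne_zero h
  have hN : HasDerivAt (fun s : ℝ => x ^ 4 + 2 * x ^ 3 + 24 * x * s + 12 * s) (24*x + 12) t := by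
    have H := ((hasDerivAt_id t).const_mul (24*x + 12)).const_add (x ^ 4 + 2 * x ^ 3)
    have H' := H.congr_of_eventuallyEq (Filter.Eventually.of_forall (fun s => by simp only [id_eq]; ring) :
      (fun s : ℝ => x ^ 4 + 2 * x ^ 3 + 24 * x * s + 12 * s) =ᶠ[nhds t] _)
    simpa using H'
  have hD : HasDerivAt (fun s : ℝ => 2 * (2 * x ^ 3 + 3 * x ^ 2 + 12 * s)) (24 : ℝ) t := by
    have H := ((hasDerivAt_id t).const_mul (24 : ℝ)).const_add (4 * x ^ 3 + 6 * x ^ 2)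
    have H' := H.congr_of_eventuallyEq (Filter.Eventually.of_forall (fun s => by simp only [id_eq]; ring) :
      (fun s : ℝ => 2 * (2 * x ^ 3 + 3 * x ^ 2 + 12 * s)) =ᶠ[nhds t] _)
    simpa using H'
  have H := hN.div hD hne
  have H' := H.congr_of_eventuallyEq (Filter.Eventually.of_forall (fun s => by simp only [q, Pi.div_apply]) :
    (fun s : ℝ => q x s) =ᶠ[nhds t] _)
  refine H'.congr_deriv ?_
  field_simp
  ring

set_option maxHeartbeats 2000000 in
theorem stmt6 (x t : ℝ)
    (h1 : 2 * x ^ 3 + 3 * x ^ 2 + 12 * t ≠ 0)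
    (h2 : x ^ 3 - 12 * t ≠ 0)
    (h3 : x ^ 3 + 3 * x ^ 2 + 3 * x - 12 * t ≠ 0) :
    deriv (fun s => q x s) t
      = iteratedDeriv 3 (fun y => q y t) x
        + 3 * q x t * iteratedDeriv 2 (fun y => q y t) x * r x t
        + 3 * (deriv (fun y => q y t) x) ^ 2 * r x t
        + 3 * deriv (fun y => q y t) x * (q x t * r x t) ^ 2 := by
  have hcont : ContinuousAt (fun y : ℝ => 2 * y ^ 3 + 3 * y ^ 2 + 12 * t) x := by fun_prop
  have hev : ∀ᶠ y in nhds x, 2 * y ^ 3 + 3 * y ^ 2 + 12 * t ≠ 0 := hcont.eventually_ne h1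
  have e1 : (deriv fun y => q y t) =ᶠ[nhds x] g1 t :=
    hev.mono fun y hy => (dq t y hy).deriv
  have e2 : deriv (g1 t) =ᶠ[nhds x] g2 t :=
    hev.mono fun y hy => (dg1 t y hy).deriv
  have d1 : deriv (fun y => q y t) x = g1 t x := (dq t x h1).deriv
  have d2 : iteratedDeriv 2 (fun y => q y t) x = g2 t x := by
    rw [iteratedDeriv_succ, iteratedDeriv_one, e1.deriv_eq, (dg1 t x h1).deriv]
  have d3 : iteratedDeriv 3 (fun y => q y t) x = g3 t x := by
    have E : deriv (deriv fun y => q y t) =ᶠ[nhds x] g2 t := e1.deriv.trans e2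
    rw [iteratedDeriv_succ, iteratedDeriv_succ, iteratedDeriv_one, E.deriv_eq,
      (dg2 t x h1).deriv]
  rw [(dqt x t h1).deriv, d1, d2, d3, q, r, g1, g2, g3]
  have hne : 2 * (2 * x ^ 3 + 3 * x ^ 2 + 12 * t) ≠ 0 := mul_ne_zero two_ne_zero h1
  have h1' : x ^ 2 * (x * 2 + 3) + 12 * t ≠ 0 := fun h => h1 (by linear_combination h)
  have h3' : x * (x * (x + 3) + 3) - 12 * t ≠ 0 := fun h => h3 (by linear_combination h)
  field_simp
  ring
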